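/- Under the particle-filter transition setup, the Boers entropy estimator satisfies the upper bound of Theorem 4: for every index set B ⊆ Fin n, −Ĥ ≤ u(B), i.e. −(Real.log (∑ i, z i * w i) − ∑ i, v i * Real.log (z i * ∑ j, T i j * w j)) ≤ −Real.log (∑ i, z i * w i) + ∑ i ∉ B, v i * Real.log (m * z i) + ∑ i ∈ B, v i * Real.log (z i * ∑ j, T i j * w j). -/

import Mathlib

/-- Theorem 4 (upper bound): under the particle-filter transition setup, for every
index set `B ⊆ Fin n`, the negated Boers entropy estimator `-Ĥ` is bounded above
by the simplified upper bound `u(B)`. -/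
theorem boers_entropy_upper_bound
    (n : ℕ) (hn : 1 ≤ n)
    (w v z : Fin n → ℝ) (T : Fin n → Fin n → ℝ) (m : ℝ)
    (hw : ∀ j, 0 ≤ w j) (hwsum : ∑ j, w j = 1)
    (hv : ∀ i, 0 ≤ v i)
    (hz : ∀ i, 0 < z i)
    (hm : 0 < m)
    (hT0 : ∀ i j, 0 ≤ T i j) (hTm : ∀ i j, T i j ≤ m)
    (hTw : ∀ i, 0 < ∑ j, T i j * w j)
    (B : Finset (Fin n)) :
    -(Real.log (∑ i, z i * w i) - ∑ i, v i * Real.log (z i * ∑ j, T i j * w j)) ≤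
      -Real.log (∑ i, z i * w i)
        + ∑ i ∈ Bᶜ, v i * Real.log (m * z i)
        + ∑ i ∈ B, v i * Real.log (z i * ∑ j, T i j * w j) := by
  have key : ∑ i, v i * Real.log (z i * ∑ j, T i j * w j) ≤
      ∑ i ∈ Bᶜ, v i * Real.log (m * z i)
        + ∑ i ∈ B, v i * Real.log (z i * ∑ j, T i j * w j) := by
    rw [← Finset.sum_compl_add_sum B (fun i => v i * Real.log (z i * ∑ j, T i j * w j))]
    apply add_le_add_left
    apply Finset.sum_le_sum
    intro i hi
    have hle : (∑ j, T i j * w j) ≤ m := by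
      calc (∑ j, T i j * w j) ≤ ∑ j, m * w j := by
            apply Finset.sum_le_sum; intro j _; exact mul_le_mul_of_nonneg_right (hTm i j) (hw j)
        _ = m := by rw [← Finset.mul_sum, hwsum, mul_one]
    have h2 : z i * (∑ j, T i j * w j) ≤ m * z i := by
      calc z i * (∑ j, T i j * w j) ≤ z i * m := mul_le_mul_of_nonneg_left hle (hz i).le
        _ = m * z i := mul_comm _ _
    exact mul_le_mul_of_nonneg_left (Real.log_le_log (mul_pos (hz i) (hTw i)) h2) (hv i)
  linarith
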